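/- Suppose G is a nontrivial subgroup of PSL(2,ℂ) with non-discrete centralizer, and G contains a hyperbolic element h. Then every nonidentity element of G is hyperbolic or elliptic with the same axis as h (i.e., fixes both fixed points of h on ℂP¹), and no element of G exchanges the two fixed points of h. -/

import Mathlib

open Filter Matrix Topology

noncomputable section

/-- We model PSL(2,ℂ) by SL(2,ℂ) acting on the Riemann sphere `OnePoint ℂ = ℂ ∪ {∞}`
by Möbius transformations (the kernel of the action is the center {±1}). -/
abbrev SL2C := Matrix.SpecialLinearGroup (Fin 2) ℂ

instance : TopologicalSpace SL2C :=
  TopologicalSpace.induced (fun g => (g : Matrix (Fin 2) (Fin 2) ℂ)) inferInstance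

/-- The Möbius action of an element of SL(2,ℂ) on the Riemann sphere ℂP¹ = ℂ ∪ {∞}. -/
def moebius (g : SL2C) : OnePoint ℂ → OnePoint ℂ := fun z =>
  Option.casesOn (show Option ℂ from z)
    (if g.1 1 0 = 0 then (OnePoint.infty : OnePoint ℂ)
     else ((g.1 0 0 / g.1 1 0 : ℂ) : OnePoint ℂ))
    (fun w => if g.1 1 0 * w + g.1 1 1 = 0 then (OnePoint.infty : OnePoint ℂ)
      else (((g.1 0 0 * w + g.1 0 1) / (g.1 1 0 * w + g.1 1 1) : ℂ) : OnePoint ℂ))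

/-- `g` acts as the identity on ℂP¹, i.e. `g` represents the identity of PSL(2,ℂ). -/
def IsIdentity (g : SL2C) : Prop := ∀ z : OnePoint ℂ, moebius g z = z

/-- `g` fixes the point `z` of ℂP¹. -/
def Fixes (g : SL2C) (z : OnePoint ℂ) : Prop := moebius g z = z

/-- The square of the trace; this is a well-defined invariant of an element of PSL(2,ℂ). -/
def trSq (g : SL2C) : ℂ := (Matrix.trace (g : Matrix (Fin 2) (Fin 2) ℂ)) ^ 2

/-- Elliptic: not the identity (in PSL(2,ℂ)) and tr² ∈ [0,4). -/
def IsElliptic (g : SL2C) : Prop :=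
  ¬ IsIdentity g ∧ ∃ r : ℝ, 0 ≤ r ∧ r < 4 ∧ trSq g = (r : ℂ)

/-- Hyperbolic (loxodromic): tr² ∈ ℂ \ [0,4]. -/
def IsHyperbolic (g : SL2C) : Prop :=
  ∀ r : ℝ, 0 ≤ r → r ≤ 4 → trSq g ≠ (r : ℂ)

/-- Parabolic: not the identity in PSL(2,ℂ) and exactly one fixed point on ℂP¹. -/
def IsParabolic (g : SL2C) : Prop := ¬ IsIdentity g ∧ ∃! z : OnePoint ℂ, Fixes g z

/-- Parabolic, via traces: not the identity in PSL(2,ℂ) and tr² = 4. -/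
def IsParabolicTr (g : SL2C) : Prop := ¬ IsIdentity g ∧ trSq g = 4

/-- The (preimage in SL(2,ℂ) of the) centralizer of `G` in PSL(2,ℂ): all `h` commuting
with every `g ∈ G` as Möbius transformations. -/
def pslCentralizer (G : Subgroup SL2C) : Set SL2C :=
  {h : SL2C | ∀ g ∈ G, ∀ z : OnePoint ℂ, moebius (h * g) z = moebius (g * h) z}

/- ======== auxiliary lemmas ======== -/

lemma moebius_infty (g : SL2C) : moebius g OnePoint.infty =
    (if g.1 1 0 = 0 then (OnePoint.infty : OnePoint ℂ)
     else ((g.1 0 0 / g.1 1 0 : ℂ) : OnePoint ℂ)) := rfl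

lemma moebius_coe (g : SL2C) (w : ℂ) : moebius g (w : OnePoint ℂ) =
    (if g.1 1 0 * w + g.1 1 1 = 0 then (OnePoint.infty : OnePoint ℂ)
      else (((g.1 0 0 * w + g.1 0 1) / (g.1 1 0 * w + g.1 1 1) : ℂ) : OnePoint ℂ)) := rfl

def hp (v : ℂ × ℂ) : OnePoint ℂ :=
  if v.2 = 0 then OnePoint.infty else ((v.1 / v.2 : ℂ) : OnePoint ℂ)

def act (g : SL2C) (v : ℂ × ℂ) : ℂ × ℂ :=
  (g.1 0 0 * v.1 + g.1 0 1 * v.2, g.1 1 0 * v.1 + g.1 1 1 * v.2)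

lemma act_one (v : ℂ × ℂ) : act 1 v = v := by
  simp [act, Matrix.SpecialLinearGroup.coe_one]

lemma act_mul (g h : SL2C) (v : ℂ × ℂ) : act (g * h) v = act g (act h v) := by
  have hco : ((g * h : SL2C) : Matrix (Fin 2) (Fin 2) ℂ) = (g : Matrix (Fin 2) (Fin 2) ℂ) * h := rfl
  simp only [act, hco, Matrix.mul_apply, Fin.sum_univ_two, Prod.mk.injEq]
  constructor <;> ring

lemma moebius_hp (g : SL2C) (v : ℂ × ℂ) (hv : v.2 = 0 → v.1 ≠ 0) :
    moebius g (hp v) = hp (act g v) := by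
  by_cases h2 : v.2 = 0
  · have h1 := hv h2
    have hl : hp v = OnePoint.infty := if_pos h2
    rw [hl, moebius_infty]
    by_cases hc : g.1 1 0 = 0
    · simp [hc, hp, act, h2]
    · have hne : g.1 1 0 * v.1 ≠ 0 := mul_ne_zero hc h1
      rw [if_neg hc]
      simp only [hp, act, h2, mul_zero, add_zero]
      rw [if_neg hne]
      rw [mul_comm (g.1 0 0) v.1, mul_comm (g.1 1 0) v.1, mul_div_mul_left _ _ h1]
  · have hl : hp v = ((v.1 / v.2 : ℂ) : OnePoint ℂ) := if_neg h2
    rw [hl, moebius_coe]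
    have key : g.1 1 0 * (v.1 / v.2) + g.1 1 1 = (g.1 1 0 * v.1 + g.1 1 1 * v.2) / v.2 := by
      field_simp
    by_cases hd : g.1 1 0 * v.1 + g.1 1 1 * v.2 = 0
    · rw [key, hd, zero_div, if_pos rfl]
      simp [hp, act, hd]
    · have hne : g.1 1 0 * (v.1 / v.2) + g.1 1 1 ≠ 0 := by
        rw [key]; exact div_ne_zero hd h2
      rw [if_neg hne]
      simp only [hp, act, if_neg hd]
      congr 1
      rw [key]
      have hnum : g.1 0 0 * (v.1 / v.2) + g.1 0 1 = (g.1 0 0 * v.1 + g.1 0 1 * v.2) / v.2 := by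
        field_simp
      rw [hnum, div_div_div_cancel_right₀]
      exact (if_neg hd).symm
      exact h2

def rep (z : OnePoint ℂ) : ℂ × ℂ := Option.casesOn (show Option ℂ from z) (1, 0) (fun w => (w, 1))

lemma rep_infty : rep OnePoint.infty = (1, 0) := rfl
lemma rep_coe (w : ℂ) : rep (w : OnePoint ℂ) = (w, 1) := rfl

lemma hp_rep (z : OnePoint ℂ) : hp (rep z) = z := by
  cases z using OnePoint.rec
  · rw [rep_infty]; simp [hp]
  · rw [rep_coe]; simp [hp]

lemma rep_cond (z : OnePoint ℂ) : (rep z).2 = 0 → (rep z).1 ≠ 0 := by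
  cases z using OnePoint.rec
  · rw [rep_infty]; intro _; exact one_ne_zero
  · rw [rep_coe]; intro hq; exact absurd hq one_ne_zero

lemma act_ne_zero (g : SL2C) {v : ℂ × ℂ} (hv : v.2 = 0 → v.1 ≠ 0) :
    (act g v).2 = 0 → (act g v).1 ≠ 0 := by
  intro h2 h1
  have hv0 : act g v = 0 := Prod.ext h1 h2
  have hveq : v = 0 := by
    have h3 := act_mul g⁻¹ g v
    rw [inv_mul_cancel, act_one] at h3
    rw [h3, hv0]
    simp [act]
  rw [hveq] at hv
  exact hv rfl rfl

lemma moebius_mul (g h : SL2C) (z : OnePoint ℂ) :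
    moebius (g * h) z = moebius g (moebius h z) := by
  conv_lhs => rw [← hp_rep z]
  rw [moebius_hp _ _ (rep_cond z), act_mul, ← moebius_hp _ _ (act_ne_zero h (rep_cond z)),
    ← moebius_hp _ _ (rep_cond z), hp_rep]

lemma moebius_one (z : OnePoint ℂ) : moebius 1 z = z := by
  rw [← hp_rep z, moebius_hp _ _ (rep_cond z), act_one, hp_rep]

lemma moebius_inj (g : SL2C) : Function.Injective (moebius g) := by
  intro x y hxy
  have h3 := congrArg (moebius g⁻¹) hxy
  rwa [← moebius_mul, ← moebius_mul, inv_mul_cancel, moebius_one, moebius_one] at h3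

lemma moebius_cancel (m : SL2C) (z : OnePoint ℂ) : moebius m (moebius m⁻¹ z) = z := by
  rw [← moebius_mul, mul_inv_cancel, moebius_one]

lemma moebius_cancel' (m : SL2C) (z : OnePoint ℂ) : moebius m⁻¹ (moebius m z) = z := by
  rw [← moebius_mul, inv_mul_cancel, moebius_one]

lemma conj_moebius (m g : SL2C) (w w' : OnePoint ℂ) :
    moebius (m⁻¹ * g * m) w = w' ↔ moebius g (moebius m w) = moebius m w' := by
  rw [moebius_mul, moebius_mul]
  constructor
  · intro hq; rw [← hq, moebius_cancel]
  · intro hq; rw [hq, moebius_cancel']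

lemma det_entries (g : SL2C) : g.1 0 0 * g.1 1 1 - g.1 0 1 * g.1 1 0 = 1 := by
  have hq := g.2; rwa [Matrix.det_fin_two] at hq

lemma diag_of_fixes (g : SL2C) (hi : Fixes g OnePoint.infty) (h0 : Fixes g ((0:ℂ) : OnePoint ℂ)) :
    g.1 1 0 = 0 ∧ g.1 0 1 = 0 := by
  have hc : g.1 1 0 = 0 := by
    by_contra hc
    rw [Fixes, moebius_infty, if_neg hc] at hi
    exact OnePoint.coe_ne_infty _ hi
  refine ⟨hc, ?_⟩
  have hd : g.1 1 1 ≠ 0 := by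
    intro hd
    have hq := det_entries g
    rw [hc, hd] at hq
    simp at hq
  rw [Fixes, moebius_coe] at h0
  rw [hc] at h0
  simp only [zero_mul, zero_add, mul_zero] at h0
  rw [if_neg hd] at h0
  rw [OnePoint.coe_eq_coe, div_eq_iff hd] at h0
  simpa using h0

lemma anti_of_swaps (g : SL2C) (hi : moebius g OnePoint.infty = ((0:ℂ) : OnePoint ℂ))
    (h0 : moebius g ((0:ℂ) : OnePoint ℂ) = OnePoint.infty) :
    g.1 0 0 = 0 ∧ g.1 1 1 = 0 := by
  constructor
  · rw [moebius_infty] at hi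
    by_cases hc : g.1 1 0 = 0
    · rw [if_pos hc] at hi; exact absurd hi.symm (OnePoint.coe_ne_infty _)
    · rw [if_neg hc, OnePoint.coe_eq_coe, div_eq_iff hc] at hi
      simpa using hi
  · rw [moebius_coe] at h0
    by_cases hd : g.1 1 0 * 0 + g.1 1 1 = 0
    · simpa using hd
    · rw [if_neg hd] at h0
      exact absurd h0 (OnePoint.coe_ne_infty _)

lemma isIdentity_of_pm_one (g : SL2C) (hg : g.1 = 1 ∨ g.1 = -1) : IsIdentity g := by
  intro z
  rcases hg with hg | hg
  · have h1 : g.1 1 0 = 0 := by rw [hg]; simp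
    have h2 : g.1 0 1 = 0 := by rw [hg]; simp [Matrix.one_apply]
    have h3 : g.1 0 0 = 1 := by rw [hg]; simp
    have h4 : g.1 1 1 = 1 := by rw [hg]; simp
    cases z using OnePoint.rec
    · rw [moebius_infty, if_pos h1]
    · rw [moebius_coe, h1, h2, h3, h4]
      norm_num
  · have h1 : g.1 1 0 = 0 := by rw [hg]; simp
    have h2 : g.1 0 1 = 0 := by rw [hg]; simp [Matrix.one_apply]
    have h3 : g.1 0 0 = -1 := by rw [hg]; simp
    have h4 : g.1 1 1 = -1 := by rw [hg]; simp
    cases z using OnePoint.rec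
    · rw [moebius_infty, if_pos h1]
    · rw [moebius_coe, h1, h2, h3, h4]
      norm_num

lemma pm_one_of_diag_eq (g : SL2C) (hc : g.1 1 0 = 0) (hb : g.1 0 1 = 0)
    (had : g.1 0 0 = g.1 1 1) : g.1 = 1 ∨ g.1 = -1 := by
  have hdet := det_entries g
  rw [hb, ← had] at hdet
  simp only [zero_mul, sub_zero] at hdet
  rcases mul_self_eq_one_iff.1 hdet with ha | ha
  · left; ext i j; fin_cases i <;> fin_cases j <;>
      simp_all [Matrix.one_apply, ← had]
  · right; ext i j; fin_cases i <;> fin_cases j <;>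
      simp_all [Matrix.one_apply, ← had]

lemma diag_eq_of_third (g : SL2C) (hc : g.1 1 0 = 0) (hb : g.1 0 1 = 0)
    (u : ℂ) (hu : u ≠ 0) (hfx : Fixes g (u : OnePoint ℂ)) : g.1 0 0 = g.1 1 1 := by
  have hdet := det_entries g
  rw [hb] at hdet
  simp only [zero_mul, sub_zero] at hdet
  have hd : g.1 1 1 ≠ 0 := by intro hd; rw [hd] at hdet; simp at hdet
  rw [Fixes, moebius_coe, hc, hb] at hfx
  simp only [zero_mul, zero_add, add_zero] at hfx
  rw [if_neg hd, OnePoint.coe_eq_coe, div_eq_iff hd] at hfx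
  rw [mul_comm u] at hfx
  exact mul_right_cancel₀ hu hfx

lemma isIdentity_of_third (g : SL2C) (hc : g.1 1 0 = 0) (hb : g.1 0 1 = 0)
    (u : ℂ) (hu : u ≠ 0) (hfx : Fixes g (u : OnePoint ℂ)) : IsIdentity g :=
  isIdentity_of_pm_one g (pm_one_of_diag_eq g hc hb (diag_eq_of_third g hc hb u hu hfx))

lemma isIdentity_of_parab (g : SL2C) (hc : g.1 1 0 = 0) (hb : g.1 0 1 = 0)
    (htr : trSq g = 4) : IsIdentity g := by
  have hdet := det_entries g
  rw [hb] at hdet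
  simp only [zero_mul, sub_zero] at hdet
  rw [trSq, Matrix.trace_fin_two] at htr
  have hsub : (g.1 0 0 - g.1 1 1) ^ 2 = 0 := by linear_combination htr - 4 * hdet
  have had : g.1 0 0 = g.1 1 1 := by
    have h2 := pow_eq_zero_iff (n := 2) (by norm_num) |>.1 hsub
    exact sub_eq_zero.1 h2
  exact isIdentity_of_pm_one g (pm_one_of_diag_eq g hc hb had)

lemma isIdentity_pm (g : SL2C) (hg : IsIdentity g) : g.1 = 1 ∨ g.1 = -1 := by
  have hinf : Fixes g OnePoint.infty := hg OnePoint.infty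
  have h0 : Fixes g ((0:ℂ) : OnePoint ℂ) := hg _
  obtain ⟨hc, hb⟩ := diag_of_fixes g hinf h0
  exact pm_one_of_diag_eq g hc hb
    (diag_eq_of_third g hc hb 1 one_ne_zero (hg ((1:ℂ) : OnePoint ℂ)))

lemma moebius_eq_pm (M N : SL2C) (hq : ∀ z, moebius M z = moebius N z) :
    M.1 = N.1 ∨ M.1 = -N.1 := by
  have hid : IsIdentity (M * N⁻¹) := by
    intro z
    rw [moebius_mul, hq, moebius_cancel]
  rcases isIdentity_pm _ hid with h1 | h1
  · left
    have h2 : M = N := by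
      have h3 : M * N⁻¹ = 1 := Subtype.ext h1
      exact mul_inv_eq_one.1 h3
    rw [h2]
  · right
    have hM : M = (M * N⁻¹) * N := by rw [inv_mul_cancel_right]
    calc M.1 = ((M * N⁻¹) * N).1 := by rw [← hM]
    _ = (M * N⁻¹).1 * N.1 := Matrix.SpecialLinearGroup.coe_mul _ _
    _ = -N.1 := by rw [h1]; simp

lemma comm_pm_conj (m k g : SL2C)
    (hq : ∀ z, moebius (k * g) z = moebius (g * k) z) :
    (m⁻¹*k*m).1 * (m⁻¹*g*m).1 = (m⁻¹*g*m).1 * (m⁻¹*k*m).1 ∨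
    (m⁻¹*k*m).1 * (m⁻¹*g*m).1 = -((m⁻¹*g*m).1 * (m⁻¹*k*m).1) := by
  have h1 : (m⁻¹*k*m) * (m⁻¹*g*m) = m⁻¹ * (k*g) * m := by group
  have h2 : (m⁻¹*g*m) * (m⁻¹*k*m) = m⁻¹ * (g*k) * m := by group
  rcases moebius_eq_pm _ _ hq with h3 | h3 <;>
    rw [Matrix.SpecialLinearGroup.coe_mul, Matrix.SpecialLinearGroup.coe_mul] at h3
  · left
    rw [← Matrix.SpecialLinearGroup.coe_mul, ← Matrix.SpecialLinearGroup.coe_mul, h1, h2]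
    simp only [Matrix.SpecialLinearGroup.coe_mul]
    rw [h3]
  · right
    rw [← Matrix.SpecialLinearGroup.coe_mul, ← Matrix.SpecialLinearGroup.coe_mul, h1, h2]
    simp only [Matrix.SpecialLinearGroup.coe_mul]
    rw [h3]
    simp [Matrix.mul_neg, Matrix.neg_mul]

lemma trSq_conj (m g : SL2C) : trSq (m⁻¹ * g * m) = trSq g := by
  rw [trSq, trSq]
  congr 1
  have h1 : ((m⁻¹ * g * m : SL2C) : Matrix (Fin 2) (Fin 2) ℂ)
      = ((m⁻¹ : SL2C) : Matrix (Fin 2) (Fin 2) ℂ) * (g : Matrix (Fin 2) (Fin 2) ℂ)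
        * ((m : SL2C) : Matrix (Fin 2) (Fin 2) ℂ) := by
    simp [Matrix.SpecialLinearGroup.coe_mul]
  rw [h1, Matrix.trace_mul_cycle]
  have h2 : ((m : SL2C) : Matrix (Fin 2) (Fin 2) ℂ) * ((m⁻¹ : SL2C) : Matrix (Fin 2) (Fin 2) ℂ)
      = 1 := by
    rw [← Matrix.SpecialLinearGroup.coe_mul, mul_inv_cancel, Matrix.SpecialLinearGroup.coe_one]
  rw [h2, one_mul]

lemma trSq_pm (g : SL2C) (hg : g.1 = 1 ∨ g.1 = -1) : trSq g = 4 := by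
  rcases hg with hg | hg <;> rw [trSq, hg, Matrix.trace_fin_two] <;> norm_num [Matrix.one_apply]

lemma isIdentity_unconj (m g : SL2C) (hid : IsIdentity (m⁻¹ * g * m)) : IsIdentity g := by
  intro z
  have h1 := hid (moebius m⁻¹ z)
  rw [conj_moebius m g _ _, moebius_cancel] at h1
  exact h1

lemma exists_m (a b : OnePoint ℂ) (hab : a ≠ b) :
    ∃ m : SL2C, moebius m OnePoint.infty = a ∧ moebius m ((0:ℂ) : OnePoint ℂ) = b := by
  cases a using OnePoint.rec with
  | infty =>
    cases b using OnePoint.rec with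
    | infty => exact absurd rfl hab
    | coe w =>
      refine ⟨⟨!![1, w; 0, 1], by simp [Matrix.det_fin_two]⟩, ?_, ?_⟩
      · refine (moebius_infty _).trans ?_; simp
      · refine (moebius_coe _ _).trans ?_; norm_num
  | coe u =>
    cases b using OnePoint.rec with
    | infty =>
      refine ⟨⟨!![u, -1; 1, 0], by norm_num [Matrix.det_fin_two]⟩, ?_, ?_⟩
      · refine (moebius_infty _).trans ?_; norm_num
      · refine (moebius_coe _ _).trans ?_; norm_num
    | coe w =>
      have huw : u - w ≠ 0 := sub_ne_zero.2 (fun hq => hab (by rw [hq]))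
      refine ⟨⟨!![u / (u - w), w; 1 / (u - w), 1], by
        rw [Matrix.det_fin_two_of]; field_simp⟩, ?_, ?_⟩
      · refine (moebius_infty _).trans ?_
        have h1 : (1 : ℂ) / (u - w) ≠ 0 := one_div_ne_zero huw
        norm_num [h1]
        rw [if_neg huw, OnePoint.coe_eq_coe, div_mul_cancel₀ _ huw]
      · refine (moebius_coe _ _).trans ?_; norm_num

lemma sl2c_embedding : Topology.IsEmbedding (fun g : SL2C => (g : Matrix (Fin 2) (Fin 2) ℂ)) :=
  ⟨⟨rfl⟩, fun {_ _} hq => Subtype.ext hq⟩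

instance : T2Space SL2C := sl2c_embedding.t2Space

lemma anti_comm_entry (X Y : Matrix (Fin 2) (Fin 2) ℂ)
    (hX10 : X 1 0 = 0) (hX01 : X 0 1 = 0) (hY00 : Y 0 0 = 0) (hY11 : Y 1 1 = 0)
    (hdX : X 0 0 * X 1 1 = 1) (hdY : Y 0 1 * Y 1 0 = -1)
    (hcomm : X * Y = Y * X ∨ X * Y = -(Y * X)) :
    (X 0 0)^2 = 1 ∨ (X 0 0)^2 = -1 := by
  have hB : Y 0 1 ≠ 0 := fun hq => by rw [hq] at hdY; simp at hdY
  rcases hcomm with hcm | hcm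
  · have he := congrFun (congrFun hcm 0) 1
    simp only [Matrix.mul_apply, Fin.sum_univ_two, Matrix.neg_apply,
      hX10, hX01, hY00, hY11, mul_zero, zero_mul, add_zero, zero_add] at he
    have he' : X 0 0 * Y 0 1 = X 1 1 * Y 0 1 := by linear_combination he
    have hxd := mul_right_cancel₀ hB he'
    left; linear_combination X 0 0 * hxd + hdX
  · have he := congrFun (congrFun hcm 0) 1
    simp only [Matrix.mul_apply, Fin.sum_univ_two, Matrix.neg_apply,
      hX10, hX01, hY00, hY11, mul_zero, zero_mul, add_zero, zero_add] at he
    have he' : X 0 0 * Y 0 1 = (-X 1 1) * Y 0 1 := by linear_combination he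
    have hxd := mul_right_cancel₀ hB he'
    right; linear_combination X 0 0 * hxd - hdX

lemma mem_four (A : ℂ) (hq : A^2 = 1 ∨ A^2 = -1) :
    A ∈ ({1, -1, Complex.I, -Complex.I} : Set ℂ) := by
  rcases hq with hq | hq
  · have hAA : A * A = 1 := by rw [← sq]; exact hq
    rcases mul_self_eq_one_iff.1 hAA with h1 | h1
    · exact Or.inl h1
    · exact Or.inr (Or.inl h1)
  · have h2 : (A - Complex.I) * (A + Complex.I) = 0 := by
      linear_combination hq - Complex.I_sq
    rcases mul_eq_zero.1 h2 with h1 | h1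
    · exact Or.inr (Or.inr (Or.inl (sub_eq_zero.1 h1)))
    · exact Or.inr (Or.inr (Or.inr (eq_neg_of_add_eq_zero_left h1)))

lemma diag_form (X : Matrix (Fin 2) (Fin 2) ℂ) (hX10 : X 1 0 = 0) (hX01 : X 0 1 = 0)
    (hdX : X 0 0 * X 1 1 = 1) : X = !![X 0 0, 0; 0, (X 0 0)⁻¹] := by
  have h11 : X 1 1 = (X 0 0)⁻¹ := eq_inv_of_mul_eq_one_left (by linear_combination hdX)
  ext i j
  fin_cases i <;> fin_cases j <;> simp [hX10, hX01, h11]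

lemma finite_discrete {S : Set SL2C} (hS : S.Finite) : DiscreteTopology ↥S := by
  haveI : Finite ↥S := hS.to_subtype
  infer_instance

/-- if G ≤ PSL(2,ℂ) is nontrivial with non-discrete centralizer and
contains a hyperbolic element h with fixed-point set {a, b} (a ≠ b), then every
nonidentity element of G is hyperbolic or elliptic with the same axis as h (it
fixes both a and b), and no element of G exchanges a and b. -/
theorem stmt3 (G : Subgroup SL2C)
    (hnontriv : ∃ g ∈ G, ¬ IsIdentity g)
    (hZ : ¬ DiscreteTopology ↥(pslCentralizer G))
    (h : SL2C) (hhG : h ∈ G) (hhyp : IsHyperbolic h)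
    (a b : OnePoint ℂ) (hab : a ≠ b)
    (hfix : ∀ z : OnePoint ℂ, Fixes h z ↔ z = a ∨ z = b) :
    (∀ g ∈ G, ¬ IsIdentity g →
        (IsHyperbolic g ∨ IsElliptic g) ∧ Fixes g a ∧ Fixes g b) ∧
    (∀ g ∈ G, ¬ (moebius g a = b ∧ moebius g b = a)) := by
  obtain ⟨m, hma, hmb⟩ := exists_m a b hab
  have hinj : Function.Injective (fun x : SL2C => (x : Matrix (Fin 2) (Fin 2) ℂ)) :=
    fun {x y} hq => Subtype.ext hq
  have hfa : Fixes h a := (hfix a).2 (Or.inl rfl)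
  have hfb : Fixes h b := (hfix b).2 (Or.inr rfl)
  -- conjugates of elements fixing a and b are diagonal
  have hdiag : ∀ k : SL2C, Fixes k a → Fixes k b →
      (m⁻¹*k*m).1 1 0 = 0 ∧ (m⁻¹*k*m).1 0 1 = 0 := by
    intro k ha' hb'
    apply diag_of_fixes
    · exact (conj_moebius m k _ _).2 (by rw [hma]; exact ha')
    · exact (conj_moebius m k _ _).2 (by rw [hmb]; exact hb')
  have hdetd : ∀ k : SL2C, (m⁻¹*k*m).1 0 1 = 0 →
      (m⁻¹*k*m).1 0 0 * (m⁻¹*k*m).1 1 1 = 1 := by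
    intro k hk01
    have hd := det_entries (m⁻¹*k*m)
    rw [hk01] at hd
    simpa using hd
  have hdeta : ∀ k : SL2C, (m⁻¹*k*m).1 0 0 = 0 → (m⁻¹*k*m).1 1 1 = 0 →
      (m⁻¹*k*m).1 0 1 * (m⁻¹*k*m).1 1 0 = -1 := by
    intro k h00 h11
    have hd := det_entries (m⁻¹*k*m)
    rw [h00, h11] at hd
    simp only [zero_mul, zero_sub] at hd
    linear_combination -hd
  obtain ⟨hh10, hh01⟩ := hdiag h hfa hfb
  have hdXh := hdetd h hh01
  -- every element of the centralizer fixes a and b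
  have hZfix : ∀ k ∈ pslCentralizer G, Fixes k a ∧ Fixes k b := by
    intro k hk
    have hcomm := hk h hhG
    have hka : moebius k a = a ∨ moebius k a = b := by
      apply (hfix _).1
      show moebius h (moebius k a) = moebius k a
      rw [← moebius_mul, ← hcomm a, moebius_mul, show moebius h a = a from hfa]
    have hkb : moebius k b = a ∨ moebius k b = b := by
      apply (hfix _).1
      show moebius h (moebius k b) = moebius k b
      rw [← moebius_mul, ← hcomm b, moebius_mul, show moebius h b = b from hfb]
    rcases hka with h1 | h1 <;> rcases hkb with h2 | h2
    · exact absurd (moebius_inj k (h1.trans h2.symm)) hab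
    · exact ⟨h1, h2⟩
    · exfalso
      have hanti : (m⁻¹*k*m).1 0 0 = 0 ∧ (m⁻¹*k*m).1 1 1 = 0 := by
        apply anti_of_swaps
        · exact (conj_moebius m k _ _).2 (by rw [hma, hmb]; exact h1)
        · exact (conj_moebius m k _ _).2 (by rw [hma, hmb]; exact h2)
      have hdY := hdeta k hanti.1 hanti.2
      have hpm := comm_pm_conj m h k (fun z => (hcomm z).symm)
      have hroots := anti_comm_entry _ _ hh10 hh01 hanti.1 hanti.2 hdXh hdY hpm
      have htr : trSq h = 4 ∨ trSq h = 0 := by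
        rw [← trSq_conj m h, trSq, Matrix.trace_fin_two]
        rcases hroots with hr | hr
        · left
          linear_combination (1 - ((m⁻¹*h*m).1 1 1)^2) * hr
            + ((m⁻¹*h*m).1 0 0 * (m⁻¹*h*m).1 1 1 + 3) * hdXh
        · right
          linear_combination (1 + ((m⁻¹*h*m).1 1 1)^2) * hr
            + (1 - (m⁻¹*h*m).1 0 0 * (m⁻¹*h*m).1 1 1) * hdXh
      rcases htr with h4 | h4
      · exact hhyp 4 (by norm_num) (by norm_num) (by rw [h4]; norm_num)
      · exact hhyp 0 le_rfl (by norm_num) (by rw [h4]; norm_num)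
    · exact absurd (moebius_inj k (h1.trans h2.symm)) hab
  -- no element of G swaps a and b
  have hswap : ∀ g ∈ G, ¬ (moebius g a = b ∧ moebius g b = a) := by
    rintro g hg ⟨hgab, hgba⟩
    have hanti : (m⁻¹*g*m).1 0 0 = 0 ∧ (m⁻¹*g*m).1 1 1 = 0 := by
      apply anti_of_swaps
      · exact (conj_moebius m g _ _).2 (by rw [hma, hmb]; exact hgab)
      · exact (conj_moebius m g _ _).2 (by rw [hma, hmb]; exact hgba)
    have hdY := hdeta g hanti.1 hanti.2
    apply hZ
    apply finite_discrete
    have hSfin : ((fun x : SL2C => (x : Matrix (Fin 2) (Fin 2) ℂ)) ⁻¹'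
        ((fun A : ℂ => ((m : SL2C) : Matrix (Fin 2) (Fin 2) ℂ) * !![A, 0; 0, A⁻¹]
           * ((m⁻¹ : SL2C) : Matrix (Fin 2) (Fin 2) ℂ)) ''
          {1, -1, Complex.I, -Complex.I})).Finite := by
      apply Set.Finite.preimage (hinj.injOn)
      apply Set.Finite.image
      exact (((Set.finite_singleton (-Complex.I)).insert Complex.I).insert (-1)).insert 1
    apply hSfin.subset
    intro k hk
    obtain ⟨hka, hkb⟩ := hZfix k hk
    obtain ⟨hk10, hk01⟩ := hdiag k hka hkb
    have hdX := hdetd k hk01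
    have hpm := comm_pm_conj m k g (hk g hg)
    have hroots := anti_comm_entry _ _ hk10 hk01 hanti.1 hanti.2 hdX hdY hpm
    refine ⟨(m⁻¹*k*m).1 0 0, mem_four _ hroots, ?_⟩
    have hform : ((m⁻¹*k*m : SL2C) : Matrix (Fin 2) (Fin 2) ℂ)
        = !![(m⁻¹*k*m).1 0 0, 0; 0, ((m⁻¹*k*m).1 0 0)⁻¹] := diag_form _ hk10 hk01 hdX
    show ((m : SL2C) : Matrix (Fin 2) (Fin 2) ℂ) * !![(m⁻¹*k*m).1 0 0, 0; 0, ((m⁻¹*k*m).1 0 0)⁻¹]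
        * ((m⁻¹ : SL2C) : Matrix (Fin 2) (Fin 2) ℂ) = (k : Matrix (Fin 2) (Fin 2) ℂ)
    rw [← hform]
    have hkk : k = m * (m⁻¹*k*m) * m⁻¹ := by group
    conv_rhs => rw [hkk]
    simp [Matrix.SpecialLinearGroup.coe_mul]
  refine ⟨?_, hswap⟩
  -- there is a non-identity element of the centralizer
  have hk0 : ∃ k₀ ∈ pslCentralizer G, ¬ IsIdentity k₀ := by
    by_contra hcon
    push_neg at hcon
    apply hZ
    apply finite_discrete
    have hSfin : ((fun x : SL2C => (x : Matrix (Fin 2) (Fin 2) ℂ)) ⁻¹'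
        ({1, -1} : Set (Matrix (Fin 2) (Fin 2) ℂ))).Finite :=
      Set.Finite.preimage (hinj.injOn)
        ((Set.finite_singleton (-1)).insert 1)
    apply hSfin.subset
    intro k hk
    exact isIdentity_pm k (hcon k hk)
  obtain ⟨k₀, hk₀Z, hk₀ni⟩ := hk0
  obtain ⟨hk₀a, hk₀b⟩ := hZfix k₀ hk₀Z
  obtain ⟨hk010, hk001⟩ := hdiag k₀ hk₀a hk₀b
  -- fixed points of k₀ are exactly a and b
  have hk₀fix : ∀ z : OnePoint ℂ, Fixes k₀ z → z = a ∨ z = b := by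
    intro z hz
    have hmw : moebius m (moebius m⁻¹ z) = z := moebius_cancel m z
    have hfixw : Fixes (m⁻¹*k₀*m) (moebius m⁻¹ z) := by
      show moebius (m⁻¹*k₀*m) _ = _
      rw [conj_moebius m k₀ _ _, hmw]
      exact hz
    revert hmw hfixw
    cases (moebius m⁻¹ z) using OnePoint.rec with
    | infty =>
      intro hmw hfixw
      left; rw [← hmw, hma]
    | coe u =>
      intro hmw hfixw
      by_cases hu : u = 0
      · right
        rw [hu] at hmw
        rw [← hmw, hmb]
      · exact absurd (isIdentity_unconj m k₀
          (isIdentity_of_third _ hk010 hk001 u hu hfixw)) hk₀ni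
  intro g hg hgni
  have hcomm := hk₀Z g hg
  have hga : moebius g a = a ∨ moebius g a = b := by
    apply hk₀fix
    show moebius k₀ (moebius g a) = moebius g a
    rw [← moebius_mul, hcomm a, moebius_mul, show moebius k₀ a = a from hk₀a]
  have hgb : moebius g b = a ∨ moebius g b = b := by
    apply hk₀fix
    show moebius k₀ (moebius g b) = moebius g b
    rw [← moebius_mul, hcomm b, moebius_mul, show moebius k₀ b = b from hk₀b]
  have hfges : Fixes g a ∧ Fixes g b := by
    rcases hga with h1 | h1 <;> rcases hgb with h2 | h2
    · exact absurd (moebius_inj g (h1.trans h2.symm)) hab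
    · exact ⟨h1, h2⟩
    · exact absurd ⟨h1, h2⟩ (hswap g hg)
    · exact absurd (moebius_inj g (h1.trans h2.symm)) hab
  refine ⟨?_, hfges⟩
  by_cases hyp : IsHyperbolic g
  · exact Or.inl hyp
  · right
    rw [_root_.IsHyperbolic] at hyp
    push_neg at hyp
    obtain ⟨r, hr0, hr4, hrtr⟩ := hyp
    refine ⟨hgni, r, hr0, lt_of_le_of_ne hr4 ?_, hrtr⟩
    intro hre
    apply hgni
    obtain ⟨hg10, hg01⟩ := hdiag g hfges.1 hfges.2
    apply isIdentity_unconj m g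
    apply isIdentity_of_parab _ hg10 hg01
    rw [trSq_conj, hrtr, hre]
    norm_num


end
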